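/- For every γ ∈ (0,1], every L₀ > 0, every function u : ℤ³ → ℂ with u(0) = 0 and Σ_{α ≠ 0} |α|·|u(α)|² ≤ L₀, and every k ∈ ℤ³ with |k| ≥ 1, one has Σ_{α ∈ ℤ³, 0 < |α| ≤ 2|k|, |k−α| ≥ (1/2)·|k|^{1−γ}} |α|·|u(α)|·|u(k−α)| ≤ 4·L₀·|k|^{γ/2}. -/

import Mathlib

/-- The Euclidean norm of a lattice point in `ℤ³`. -/
noncomputable def znorm (a : Fin 3 → ℤ) : ℝ := Real.sqrt (∑ i, ((a i : ℝ)) ^ 2)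

lemma znorm_nonneg (a : Fin 3 → ℤ) : 0 ≤ znorm a := Real.sqrt_nonneg _

lemma ne_zero_of_znorm_pos {a : Fin 3 → ℤ} (h : 0 < znorm a) : a ≠ 0 := by
  rintro rfl
  simp [znorm] at h

/-- For every `γ ∈ (0,1]`, `L₀ > 0`, every `u : ℤ³ → ℂ` with `u 0 = 0` and
`∑_{α ≠ 0} |α||u α|² ≤ L₀`, and every `k` with `|k| ≥ 1`,
`∑_{0 < |α| ≤ 2|k|, |k−α| ≥ (1/2)|k|^{1−γ}} |α||u α||u (k−α)| ≤ 4·L₀·|k|^{γ/2}`. -/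
theorem bootstrap_piece_I_bound
    (γ : ℝ) (hγ0 : 0 < γ) (hγ1 : γ ≤ 1) (L₀ : ℝ) (hL₀ : 0 < L₀)
    (u : (Fin 3 → ℤ) → ℂ) (hu0 : u 0 = 0)
    (hsum : Summable (fun α : {a : Fin 3 → ℤ // a ≠ 0} => znorm α.1 * ‖u α.1‖ ^ 2))
    (hL : (∑' α : {a : Fin 3 → ℤ // a ≠ 0}, znorm α.1 * ‖u α.1‖ ^ 2) ≤ L₀)
    (k : Fin 3 → ℤ) (hk : 1 ≤ znorm k) :
    (∑' α : {a : Fin 3 → ℤ //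
        0 < znorm a ∧ znorm a ≤ 2 * znorm k ∧
          (1 / 2) * znorm k ^ ((1 : ℝ) - γ) ≤ znorm (k - a)},
      znorm α.1 * ‖u α.1‖ * ‖u (k - α.1)‖)
      ≤ 4 * L₀ * znorm k ^ (γ / 2) := by
  have hk0 : (0:ℝ) < znorm k := lt_of_lt_of_le zero_lt_one hk
  set K : ℝ := znorm k ^ (γ / 2) with hKdef
  have hKpos : 0 < K := Real.rpow_pos_of_pos hk0 _
  have hKsq : K * K = znorm k ^ γ := by
    rw [hKdef, ← Real.rpow_add hk0]; ring_nf
  set S := {a : Fin 3 → ℤ //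
      0 < znorm a ∧ znorm a ≤ 2 * znorm k ∧
        (1 / 2) * znorm k ^ ((1 : ℝ) - γ) ≤ znorm (k - a)} with hS
  set T := {a : Fin 3 → ℤ // a ≠ 0} with hT
  set g : T → ℝ := fun β => znorm β.1 * ‖u β.1‖ ^ 2 with hg
  -- two injections into T
  have hkma_pos : ∀ α : S, 0 < znorm (k - α.1) := fun α =>
    lt_of_lt_of_le (by positivity) α.2.2.2
  set ι : S → T := fun α => ⟨α.1, ne_zero_of_znorm_pos α.2.1⟩ with hι
  set j : S → T := fun α => ⟨k - α.1, ne_zero_of_znorm_pos (hkma_pos α)⟩ with hj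
  have hιinj : Function.Injective ι := by
    intro a b hab
    have h1 : (ι a).1 = (ι b).1 := congrArg Subtype.val hab
    exact Subtype.ext h1
  have hjinj : Function.Injective j := by
    intro a b hab
    have h1 : k - a.1 = k - b.1 := congrArg Subtype.val hab
    exact Subtype.ext (sub_right_injective h1)
  -- pointwise bound
  have hbound : ∀ α : S,
      znorm α.1 * ‖u α.1‖ * ‖u (k - α.1)‖ ≤
        (1/2) * K * g (ι α) + 2 * K * g (j α) := by
    intro α
    obtain ⟨hpos, hle2k, hfar⟩ := α.2
    set n := znorm α.1
    set m := znorm (k - α.1)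
    set x := ‖u α.1‖
    set y := ‖u (k - α.1)‖
    have hx : 0 ≤ x := norm_nonneg _
    have hy : 0 ≤ y := norm_nonneg _
    have hn : 0 ≤ n := le_of_lt hpos
    have hm : 0 ≤ m := znorm_nonneg _
    have hsplit : znorm k = znorm k ^ γ * znorm k ^ ((1:ℝ) - γ) := by
      rw [← Real.rpow_add hk0]; norm_num
    have hn4 : n ≤ 4 * (K * K) * m := by
      rw [hKsq]
      calc n ≤ 2 * znorm k := hle2k
        _ = 4 * znorm k ^ γ * ((1/2) * znorm k ^ ((1:ℝ) - γ)) := by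
            nth_rewrite 1 [hsplit]; ring
        _ ≤ 4 * znorm k ^ γ * m := by
            have : (0:ℝ) ≤ 4 * znorm k ^ γ := by positivity
            exact mul_le_mul_of_nonneg_left hfar this
        _ = 4 * znorm k ^ γ * m := rfl
    have key : 2 * K * (n * x * y) ≤
        2 * K * ((1/2) * K * (n * x^2) + 2 * K * (m * y^2)) := by
      have h1 : 0 ≤ n * (K * x - y)^2 := by positivity
      have h2 : n * y^2 ≤ 4 * (K * K) * m * y^2 :=
        mul_le_mul_of_nonneg_right hn4 (sq_nonneg y)
      nlinarith [h1, h2]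
    have := (mul_le_mul_iff_right₀ (by positivity : (0:ℝ) < 2 * K)).mp key
    simpa [hg, hι, hj] using this
  -- summability
  have hgS : Summable (fun α : S => g (ι α)) := hsum.comp_injective hιinj
  have hhS : Summable (fun α : S => g (j α)) := hsum.comp_injective hjinj
  have hBsum : Summable (fun α : S => (1/2) * K * g (ι α) + 2 * K * g (j α)) :=
    (hgS.mul_left _).add (hhS.mul_left _)
  have hfS : Summable (fun α : S => znorm α.1 * ‖u α.1‖ * ‖u (k - α.1)‖) :=
    Summable.of_nonneg_of_le
      (fun α => mul_nonneg (mul_nonneg (znorm_nonneg _) (norm_nonneg _)) (norm_nonneg _))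
      hbound hBsum
  have hgnonneg : ∀ β : T, 0 ≤ g β := fun β => by
    have := znorm_nonneg β.1; positivity
  have hgle : (∑' α : S, g (ι α)) ≤ L₀ :=
    le_trans (hgS.tsum_le_tsum_of_inj ι hιinj (fun c _ => hgnonneg c)
      (fun α => le_refl _) hsum) hL
  have hhle : (∑' α : S, g (j α)) ≤ L₀ :=
    le_trans (hhS.tsum_le_tsum_of_inj j hjinj (fun c _ => hgnonneg c)
      (fun α => le_refl _) hsum) hL
  calc (∑' α : S, znorm α.1 * ‖u α.1‖ * ‖u (k - α.1)‖)
      ≤ ∑' α : S, ((1/2) * K * g (ι α) + 2 * K * g (j α)) :=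
        Summable.tsum_le_tsum hbound hfS hBsum
    _ = (1/2) * K * (∑' α : S, g (ι α)) + 2 * K * (∑' α : S, g (j α)) := by
        rw [Summable.tsum_add (hgS.mul_left _) (hhS.mul_left _), tsum_mul_left, tsum_mul_left]
    _ ≤ (1/2) * K * L₀ + 2 * K * L₀ := by
        gcongr
    _ ≤ 4 * L₀ * K := by nlinarith [mul_pos hL₀ hKpos]
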